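/- Along every solution of the discrete error system, the error energy satisfies, for all t ≥ 0, (d/dt) e_h(t) = −k₁ (η¹_{N+1}(t))² − k₂ (η²_{N+1}(t))² + h Σ_{j=0}^{N} [ η²_{j+1/2} s²_{j+1/2} + η¹_{j+1/2} s¹_{j+1/2} + r¹_{j+1/2} (α θ¹_{j+1/2} − γβ θ²_{j+1/2}) + r²_{j+1/2} (β θ²_{j+1/2} − γβ θ¹_{j+1/2}) ]. -/

import Mathlib

noncomputable section

/-- Midpoint average `U_{j+1/2} = (U_j + U_{j+1})/2` of a grid function. -/
def gridMid (U : ℕ → ℝ) (j : ℕ) : ℝ := (U j + U (j + 1)) / 2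

/-- Difference quotient `δ_x U_{j+1/2} = (U_{j+1} − U_j)/h` of a grid function. -/
def gridDx (h : ℝ) (U : ℕ → ℝ) (j : ℕ) : ℝ := (U (j + 1) - U j) / h

/-- The discrete error energy `e_h`. -/
def errEnergy (ρ μ β γ α₁ h : ℝ) (N : ℕ) (θ1 θ2 η1 η2 : ℕ → ℝ) : ℝ :=
  h / 2 * ∑ j ∈ Finset.range (N + 1),
    (ρ * gridMid η1 j ^ 2 + μ * gridMid η2 j ^ 2
      + β * (γ * gridMid θ1 j - gridMid θ2 j) ^ 2 + α₁ * gridMid θ1 j ^ 2)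

/-- Along every solution of the discrete error system, the error energy
satisfies
`(d/dt)e_h(t) = −k₁(η¹_{N+1})² − k₂(η²_{N+1})² + h Σ_j [η²_{j+1/2}s²_{j+1/2} + η¹_{j+1/2}s¹_{j+1/2} + r¹_{j+1/2}(αθ¹_{j+1/2} − γβθ²_{j+1/2}) + r²_{j+1/2}(βθ²_{j+1/2} − γβθ¹_{j+1/2})]`. -/
theorem stmt_12 (ρ μ α β γ α₁ k₁ k₂ : ℝ)
    (hρ : 0 < ρ) (hμ : 0 < μ) (hα : 0 < α) (hβ : 0 < β) (hγ : 0 < γ)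
    (hk₁ : 0 < k₁) (hk₂ : 0 < k₂)
    (hα₁def : α₁ = α - γ ^ 2 * β) (hα₁ : 0 < α₁)
    (N : ℕ) (L h : ℝ) (hL : 0 < L) (hh : h = L / (N + 1))
    (θ1 θ2 η1 η2 : ℝ → ℕ → ℝ) (r1 r2 s1 s2 : ℝ → ℕ → ℝ)
    (hode1 : ∀ t ≥ (0 : ℝ), ∀ j ≤ N,
      HasDerivAt (fun s => gridMid (θ1 s) j) (gridDx h (η1 t) j + r1 t j) t)
    (hode2 : ∀ t ≥ (0 : ℝ), ∀ j ≤ N,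
      HasDerivAt (fun s => gridMid (θ2 s) j) (gridDx h (η2 t) j + r2 t j) t)
    (hode3 : ∀ t ≥ (0 : ℝ), ∀ j ≤ N,
      HasDerivAt (fun s => gridMid (η1 s) j)
        ((α * gridDx h (θ1 t) j - γ * β * gridDx h (θ2 t) j + s1 t j) / ρ) t)
    (hode4 : ∀ t ≥ (0 : ℝ), ∀ j ≤ N,
      HasDerivAt (fun s => gridMid (η2 s) j)
        ((β * gridDx h (θ2 t) j - γ * β * gridDx h (θ1 t) j + s2 t j) / μ) t)
    (hbc0 : ∀ t ≥ (0 : ℝ), η1 t 0 = 0 ∧ η2 t 0 = 0)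
    (hbcL1 : ∀ t ≥ (0 : ℝ),
      α * θ1 t (N + 1) - γ * β * θ2 t (N + 1) = -(k₁ * η1 t (N + 1)))
    (hbcL2 : ∀ t ≥ (0 : ℝ),
      β * θ2 t (N + 1) - γ * β * θ1 t (N + 1) = -(k₂ * η2 t (N + 1))) :
    ∀ t ≥ (0 : ℝ),
      HasDerivAt (fun s => errEnergy ρ μ β γ α₁ h N (θ1 s) (θ2 s) (η1 s) (η2 s))
        (-(k₁ * (η1 t (N + 1)) ^ 2) - k₂ * (η2 t (N + 1)) ^ 2
          + h * ∑ j ∈ Finset.range (N + 1),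
              (gridMid (η2 t) j * s2 t j + gridMid (η1 t) j * s1 t j
                + r1 t j * (α * gridMid (θ1 t) j - γ * β * gridMid (θ2 t) j)
                + r2 t j * (β * gridMid (θ2 t) j - γ * β * gridMid (θ1 t) j))) t := by
  intro t ht
  have hh0 : h ≠ 0 := by
    have : 0 < h := by
      rw [hh]; positivity
    linarith
  have hρ0 : ρ ≠ 0 := ne_of_gt hρ
  have hμ0 : μ ≠ 0 := ne_of_gt hμ
  -- derivative of each summand
  set D : ℕ → ℝ := fun j =>
    ρ * (2 * gridMid (η1 t) j ^ 1 *
        ((α * gridDx h (θ1 t) j - γ * β * gridDx h (θ2 t) j + s1 t j) / ρ))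
    + μ * (2 * gridMid (η2 t) j ^ 1 *
        ((β * gridDx h (θ2 t) j - γ * β * gridDx h (θ1 t) j + s2 t j) / μ))
    + β * (2 * (γ * gridMid (θ1 t) j - gridMid (θ2 t) j) ^ 1 *
        (γ * (gridDx h (η1 t) j + r1 t j) - (gridDx h (η2 t) j + r2 t j)))
    + α₁ * (2 * gridMid (θ1 t) j ^ 1 * (gridDx h (η1 t) j + r1 t j)) with hD
  have hderiv : HasDerivAt
      (fun s => errEnergy ρ μ β γ α₁ h N (θ1 s) (θ2 s) (η1 s) (η2 s))
      (h / 2 * ∑ j ∈ Finset.range (N + 1), D j) t := by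
    unfold errEnergy
    refine HasDerivAt.const_mul _ ?_
    refine HasDerivAt.fun_sum ?_
    intro j hj
    have hjN : j ≤ N := Nat.lt_succ_iff.mp (Finset.mem_range.mp hj)
    have h1 := hode1 t ht j hjN
    have h2 := hode2 t ht j hjN
    have h3 := hode3 t ht j hjN
    have h4 := hode4 t ht j hjN
    have hdj := ((h3.pow 2).const_mul ρ).add (((h4.pow 2).const_mul μ).add
      (((((h1.const_mul γ).sub h2).pow 2).const_mul β).add
        ((h1.pow 2).const_mul α₁)))
    convert hdj using 1
    · ext s; simp only [Pi.add_apply, Pi.sub_apply, Pi.pow_apply]; ring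
    · simp only [hD, Pi.sub_apply]
      push_cast
      field_simp
      ring
  -- telescoping function
  set F : ℕ → ℝ := fun j =>
    (α * θ1 t j - γ * β * θ2 t j) * η1 t j
      + (β * θ2 t j - γ * β * θ1 t j) * η2 t j with hF
  have key : ∀ j, h / 2 * D j = (F (j + 1) - F j)
      + h * (gridMid (η2 t) j * s2 t j + gridMid (η1 t) j * s1 t j
        + r1 t j * (α * gridMid (θ1 t) j - γ * β * gridMid (θ2 t) j)
        + r2 t j * (β * gridMid (θ2 t) j - γ * β * gridMid (θ1 t) j)) := by
    intro j
    simp only [hD, hF, gridMid, gridDx, hα₁def]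
    field_simp
    ring
  have hsum : h / 2 * ∑ j ∈ Finset.range (N + 1), D j
      = -(k₁ * (η1 t (N + 1)) ^ 2) - k₂ * (η2 t (N + 1)) ^ 2
        + h * ∑ j ∈ Finset.range (N + 1),
            (gridMid (η2 t) j * s2 t j + gridMid (η1 t) j * s1 t j
              + r1 t j * (α * gridMid (θ1 t) j - γ * β * gridMid (θ2 t) j)
              + r2 t j * (β * gridMid (θ2 t) j - γ * β * gridMid (θ1 t) j)) := by
    rw [Finset.mul_sum]
    simp only [key]
    rw [Finset.sum_add_distrib, Finset.sum_range_sub, ← Finset.mul_sum]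
    have hF0 : F 0 = 0 := by
      obtain ⟨h01, h02⟩ := hbc0 t ht
      simp [hF, h01, h02]
    have hFN : F (N + 1) = -(k₁ * (η1 t (N + 1)) ^ 2) - k₂ * (η2 t (N + 1)) ^ 2 := by
      simp only [hF, hbcL1 t ht, hbcL2 t ht]
      ring
    rw [hF0, hFN]
    ring
  exact hsum ▸ hderiv

end
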